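/- The bracket operation of a heterogeneous substitution system is natural: given a substitution system (T, α, ⦃−⦄) for a signature (H,θ), the assignment (Z,e) ↦ (f ↦ ⦃f⦄) is a natural transformation from the functor Ptd(C)(−, (T,η)) to the functor [C,C](T·U(−), T) (both contravariant on Ptd(C)). Concretely, for any morphism g : (Z',e') → (Z,e) of pointed endofunctors and f : (Z,e) → (T,η), one has ⦃f ∘ g⦄ = ⦃f⦄ ∘ (T·g). -/

import Mathlib

open CategoryTheory Limits

universe v u

/-- A pointed endofunctor on `C`. -/
structure Ptd (C : Type u) [Category.{v} C] where
  Z : C ⥤ C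
  e : 𝟭 C ⟶ Z

/-- A *signature* over `C`: an endofunctor `H` on the endofunctor category `[C,C]`
together with a strength `θ : (H −)·U∼ ⟶ H (−·U∼)`, natural in both variables and
satisfying the unit and composition coherence laws (here `X·Z` is the composite
`Z ⋙ X`, i.e. `A ↦ X (Z A)`). -/
structure Signature (C : Type u) [Category.{v} C] where
  H : (C ⥤ C) ⥤ (C ⥤ C)
  θ : ∀ (X : C ⥤ C) (Z : Ptd C), (Z.Z ⋙ H.obj X) ⟶ H.obj (Z.Z ⋙ X)
  θ_nat_X : ∀ {X X' : C ⥤ C} (α : X ⟶ X') (Z : Ptd C),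
      Functor.whiskerLeft Z.Z (H.map α) ≫ θ X' Z = θ X Z ≫ H.map (Functor.whiskerLeft Z.Z α)
  θ_nat_Z : ∀ (X : C ⥤ C) {Z Z' : Ptd C} (g : Z.Z ⟶ Z'.Z), Z.e ≫ g = Z'.e →
      Functor.whiskerRight g (H.obj X) ≫ θ X Z' = θ X Z ≫ H.map (Functor.whiskerRight g X)
  θ_id : ∀ X : C ⥤ C,
      θ X ⟨𝟭 C, 𝟙 (𝟭 C)⟩ =
        (Functor.leftUnitor (H.obj X)).hom ≫ H.map (Functor.leftUnitor X).inv
  θ_comp : ∀ (X : C ⥤ C) (Z Z' : Ptd C),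
      θ X ⟨Z.Z ⋙ Z'.Z, Z.e ≫ Functor.whiskerLeft Z.Z Z'.e⟩ =
        (Functor.associator Z.Z Z'.Z (H.obj X)).hom ≫
          Functor.whiskerLeft Z.Z (θ X Z') ≫ θ (Z'.Z ⋙ X) Z ≫
          H.map (Functor.associator Z.Z Z'.Z X).inv

variable {C : Type u} [Category.{v} C]

/-- A *heterogeneous substitution system* for a signature `(H, θ)`:
an `(Id + H)`-algebra, presented by its components `η : Id ⟶ T` and `τ : H T ⟶ T`,
together with, for every morphism of pointed endofunctors `f : (Z,e) ⟶ (T,η)`,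
a unique bracket `⦃f⦄ : T·Z ⟶ T` satisfying the two substitution equations. -/
structure HSS (S : Signature C) where
  T : C ⥤ C
  η : 𝟭 C ⟶ T
  τ : S.H.obj T ⟶ T
  bracket : ∀ (Z : Ptd C) (f : Z.Z ⟶ T), Z.e ≫ f = η → (Z.Z ⋙ T ⟶ T)
  bracket_η : ∀ (Z : Ptd C) (f : Z.Z ⟶ T) (hf : Z.e ≫ f = η),
      Functor.whiskerLeft Z.Z η ≫ bracket Z f hf = f
  bracket_τ : ∀ (Z : Ptd C) (f : Z.Z ⟶ T) (hf : Z.e ≫ f = η),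
      Functor.whiskerLeft Z.Z τ ≫ bracket Z f hf = S.θ T Z ≫ S.H.map (bracket Z f hf) ≫ τ
  bracket_unique : ∀ (Z : Ptd C) (f : Z.Z ⟶ T) (hf : Z.e ≫ f = η)
      (h : Z.Z ⋙ T ⟶ T),
      Functor.whiskerLeft Z.Z η ≫ h = f →
      Functor.whiskerLeft Z.Z τ ≫ h = S.θ T Z ≫ S.H.map h ≫ τ →
      h = bracket Z f hf

/-- **Naturality of the bracket operation** of a heterogeneous substitution system:
for any morphism of pointed endofunctors `g : (Z',e') ⟶ (Z,e)` and any pointed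
morphism `f : (Z,e) ⟶ (T,η)`, one has `⦃f ∘ g⦄ = ⦃f⦄ ∘ (T·g)`; i.e., the assignment
`(Z,e) ↦ (f ↦ ⦃f⦄)` is a natural transformation from `Ptd(C)(−,(T,η))` to
`[C,C](T·U(−), T)`. -/
theorem bracket_natural (S : Signature C) (hss : HSS S)
    (Z' Z : Ptd C) (g : Z'.Z ⟶ Z.Z) (hg : Z'.e ≫ g = Z.e)
    (f : Z.Z ⟶ hss.T) (hf : Z.e ≫ f = hss.η)
    (hgf : Z'.e ≫ (g ≫ f) = hss.η) :
    hss.bracket Z' (g ≫ f) hgf = Functor.whiskerRight g hss.T ≫ hss.bracket Z f hf := by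
  symm
  apply hss.bracket_unique
  · have h1 : Functor.whiskerLeft Z'.Z hss.η ≫ Functor.whiskerRight g hss.T
        = g ≫ Functor.whiskerLeft Z.Z hss.η := by
      ext A
      simpa using (hss.η.naturality (g.app A)).symm
    rw [← Category.assoc, h1, Category.assoc, hss.bracket_η]
  · have h2 : Functor.whiskerLeft Z'.Z hss.τ ≫ Functor.whiskerRight g hss.T
        = Functor.whiskerRight g (S.H.obj hss.T) ≫ Functor.whiskerLeft Z.Z hss.τ := by
      ext A
      simp [hss.τ.naturality (g.app A)]
    rw [← Category.assoc, h2, Category.assoc, hss.bracket_τ Z f hf,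
        ← Category.assoc, S.θ_nat_Z hss.T g hg, Category.assoc, S.H.map_comp, Category.assoc]
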